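/- Let P(x,y) be a real polynomial in two variables satisfying the right self-distributivity equation P(P(x,y),z) = P(P(x,z),P(y,z)) for all real numbers x, y, z. Then either there exists a real number a such that P(x,y) = a·x + (1−a)·y for all x, y, or P is a polynomial in the variable x only, i.e. there exists a one-variable real polynomial q with P(x,y) = q(x) for all x, y. -/

import Mathlib

open Polynomial

noncomputable section

namespace SelfDistrib

/-- evaluation of a 2-variable polynomial presented as `(ℝ[x])[y]`. -/
def E (F : Polynomial (Polynomial ℝ)) (x y : ℝ) : ℝ := eval₂ (evalRingHom x) y F

lemma funext2 {p q : Polynomial (Polynomial ℝ)}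
    (h : ∀ x y : ℝ, eval₂ (evalRingHom x) y p = eval₂ (evalRingHom x) y q) : p = q := by
  apply Polynomial.ext; intro k
  apply Polynomial.funext; intro x
  have h1 : p.map (evalRingHom x) = q.map (evalRingHom x) :=
    Polynomial.funext fun y => by rw [eval_map, eval_map]; exact h x y
  have h2 := congrArg (fun r => Polynomial.coeff r k) h1
  simpa using h2

lemma funext3 {p q : Polynomial (Polynomial (Polynomial ℝ))}
    (h : ∀ x y z : ℝ, eval₂ (eval₂RingHom (evalRingHom x) y) z p
        = eval₂ (eval₂RingHom (evalRingHom x) y) z q) : p = q := by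
  apply Polynomial.ext; intro k
  apply funext2; intro x y
  have h1 : p.map (eval₂RingHom (evalRingHom x) y) = q.map (eval₂RingHom (evalRingHom x) y) :=
    Polynomial.funext fun z => by rw [eval_map, eval_map]; exact h x y z
  have h2 := congrArg (fun r => Polynomial.coeff r k) h1
  simpa using h2

lemma infinite_range_of_natDegree_ne_zero {p : Polynomial ℝ} (hp : p.natDegree ≠ 0) :
    (Set.range fun x => p.eval x).Infinite := by
  by_contra hfin
  rw [Set.not_infinite] at hfin
  have hsub : (Set.univ : Set ℝ) ⊆
      ⋃ v ∈ Set.range (fun x => p.eval x), {x : ℝ | (p - C v).eval x = 0} := by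
    intro x _
    refine Set.mem_biUnion ⟨x, rfl⟩ ?_
    simp
  have hfin2 : (⋃ v ∈ Set.range (fun x => p.eval x), {x : ℝ | (p - C v).eval x = 0}).Finite := by
    refine hfin.biUnion ?_
    intro v _
    have hne : p - C v ≠ 0 := by
      intro h0
      have hp' : p = C v := sub_eq_zero.mp h0
      rw [hp'] at hp; simp at hp
    simpa [Polynomial.IsRoot] using Polynomial.finite_setOf_isRoot hne
  exact Set.infinite_univ (hfin2.subset hsub)

lemma poly_zero_of_range_subset_roots {p q : Polynomial ℝ} (hq : q.natDegree ≠ 0)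
    (h : ∀ x : ℝ, p.eval (q.eval x) = 0) : p = 0 := by
  apply Polynomial.eq_zero_of_infinite_isRoot
  apply (infinite_range_of_natDegree_ne_zero hq).mono
  rintro u ⟨x, rfl⟩
  exact h x

lemma E_eq_eval_evalC (F : Polynomial (Polynomial ℝ)) (x z : ℝ) :
    E F x z = (F.eval (C z)).eval x := by
  unfold E
  have h := Polynomial.hom_eval₂ F (RingHom.id (Polynomial ℝ)) (evalRingHom x) (C z)
  have h2 : eval₂ (RingHom.id (Polynomial ℝ)) (C z) F = F.eval (C z) := rfl
  rw [h2, RingHom.comp_id] at h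
  have h3 : (evalRingHom x) (C z) = z := by simp
  rw [h3] at h
  exact h.symm

section DTrick

variable (F : Polynomial (Polynomial ℝ))

/-- coefficient of `x^i` in `P(x,y)` as a polynomial in the second variable. -/
def bpol (i : ℕ) : Polynomial ℝ :=
  ∑ j ∈ Finset.range (F.natDegree + 1), C ((F.coeff j).coeff i) * X ^ j

/-- the diagonal `D(z) = P(z,z)`. -/
def Dg : Polynomial ℝ := F.eval Polynomial.X

lemma bpol_eval (i : ℕ) (z : ℝ) : (bpol F i).eval z = (F.eval (C z)).coeff i := by
  unfold bpol
  rw [eval_finset_sum, Polynomial.eval_eq_sum_range (C z), finset_sum_coeff]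
  apply Finset.sum_congr rfl
  intro j _
  rw [← C_pow, coeff_mul_C]
  simp

lemma bpol_coeff (i l : ℕ) (hl : l ≤ F.natDegree) :
    (bpol F i).coeff l = (F.coeff l).coeff i := by
  unfold bpol
  rw [finset_sum_coeff, Finset.sum_eq_single l]
  · simp
  · intro j _ hj
    rw [coeff_C_mul, coeff_X_pow, if_neg (Ne.symm hj), mul_zero]
  · intro h
    exact absurd (Finset.mem_range.mpr (Nat.lt_succ_of_le hl)) h

lemma Dg_eval (z : ℝ) : (Dg F).eval z = E F z z := by
  unfold Dg E
  have h := Polynomial.hom_eval₂ F (RingHom.id (Polynomial ℝ)) (evalRingHom z) Polynomial.X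
  rw [RingHom.comp_id] at h
  have h2 : (evalRingHom z) Polynomial.X = z := by simp
  rw [h2] at h
  have h3 : eval₂ (RingHom.id (Polynomial ℝ)) Polynomial.X F = F.eval Polynomial.X := rfl
  have h4 : (evalRingHom z) (F.eval Polynomial.X) = (F.eval Polynomial.X).eval z := rfl
  rw [h3, h4] at h
  exact h

theorem D_affine (hm : F.natDegree ≠ 0) (hA : ∃ j, (F.coeff j).natDegree ≠ 0)
    (hP : ∀ x y z : ℝ, E F (E F x y) z = E F (E F x z) (E F y z)) :
    Dg F = Polynomial.X ∨ ∃ β : ℝ, Dg F = C β - Polynomial.X := by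
  obtain ⟨j0, hj0⟩ := hA
  have hFj0 : F.coeff j0 ≠ 0 := fun h => hj0 (by rw [h]; simp)
  have hj0m : j0 ≤ F.natDegree := le_natDegree_of_ne_zero hFj0
  have hlc : (F.coeff j0).coeff (F.coeff j0).natDegree ≠ 0 := by
    rw [coeff_natDegree]; exact leadingCoeff_ne_zero.mpr hFj0
  set i1 := (F.coeff j0).natDegree with hi1
  have hbi1 : bpol F i1 ≠ 0 := by
    intro h
    have h2 := bpol_coeff F i1 j0 hj0m
    rw [h] at h2; simp only [coeff_zero] at h2
    exact hlc h2.symm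
  have step2 : ∀ z : ℝ, (bpol F i1).eval z ≠ 0 →
      ∀ i : ℕ, (F.eval (C z)).coeff i = (F.eval (C ((Dg F).eval z))).coeff i := by
    intro z hz i
    have hi1ne : i1 ≠ 0 := hj0
    have hqdeg : (F.eval (C z)).natDegree ≠ 0 := by
      have hcoeff : (F.eval (C z)).coeff i1 ≠ 0 := by rw [← bpol_eval]; exact hz
      intro h0
      have hle := le_natDegree_of_ne_zero hcoeff
      rw [h0, Nat.le_zero] at hle
      exact hi1ne hle
    have hvan : ∀ x : ℝ,
        (F.eval (C z) - F.eval (C ((Dg F).eval z))).eval ((F.eval (C z)).eval x) = 0 := by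
      intro x
      rw [eval_sub, sub_eq_zero, ← E_eq_eval_evalC F x z,
        ← E_eq_eval_evalC F (E F x z) z, ← E_eq_eval_evalC F (E F x z) ((Dg F).eval z),
        Dg_eval F z]
      exact hP x z z
    have hpz := poly_zero_of_range_subset_roots hqdeg hvan
    have hc := congrArg (fun r => Polynomial.coeff r i) hpz
    simpa [sub_eq_zero] using hc
  have step3 : ∀ i, (bpol F i).comp (Dg F) = bpol F i := by
    intro i
    apply Polynomial.eq_of_infinite_eval_eq
    refine ((Polynomial.finite_setOf_isRoot hbi1).infinite_compl).mono ?_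
    intro z hz
    simp only [Set.mem_compl_iff, Set.mem_setOf_eq, Polynomial.IsRoot] at hz ⊢
    rw [eval_comp, bpol_eval, bpol_eval]
    exact (step2 z hz i).symm
  have hF0 : F ≠ 0 := fun h => hm (by rw [h]; simp)
  have ham : F.leadingCoeff ≠ 0 := leadingCoeff_ne_zero.mpr hF0
  set b := bpol F F.leadingCoeff.natDegree with hbdef
  have hbcoeff : b.coeff F.natDegree ≠ 0 := by
    rw [hbdef, bpol_coeff F _ F.natDegree le_rfl]
    rw [show F.coeff F.natDegree = F.leadingCoeff from coeff_natDegree, coeff_natDegree]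
    exact leadingCoeff_ne_zero.mpr ham
  have hbdeg : b.natDegree ≠ 0 := by
    intro h0
    have hle := le_natDegree_of_ne_zero hbcoeff
    rw [h0, Nat.le_zero] at hle
    exact hm hle
  have hstep3b := step3 F.leadingCoeff.natDegree
  have hDdeg : (Dg F).natDegree = 1 := by
    have h := congrArg Polynomial.natDegree hstep3b
    rw [natDegree_comp] at h
    exact Nat.eq_of_mul_eq_mul_left (Nat.pos_of_ne_zero hbdeg) (by rw [mul_one]; exact h)
  have hDne : Dg F ≠ 0 := fun h => by rw [h] at hDdeg; simp at hDdeg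
  have hDeq : Dg F = C ((Dg F).coeff 1) * X + C ((Dg F).coeff 0) :=
    eq_X_add_C_of_natDegree_le_one (by rw [hDdeg])
  set α := (Dg F).coeff 1 with hαdef
  set β := (Dg F).coeff 0 with hβdef
  have hαlead : (Dg F).leadingCoeff = α := by rw [leadingCoeff, hDdeg]
  have hαne : α ≠ 0 := by rw [← hαlead]; exact leadingCoeff_ne_zero.mpr hDne
  have hbl : b.leadingCoeff ≠ 0 :=
    leadingCoeff_ne_zero.mpr (fun h0 => hbdeg (by rw [h0]; simp))
  have hpow : α ^ b.natDegree = 1 := by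
    have h := congrArg Polynomial.leadingCoeff hstep3b
    rw [leadingCoeff_comp (by rw [hDdeg]; exact one_ne_zero), hαlead] at h
    exact mul_left_cancel₀ hbl (by rw [h, mul_one])
  have habs : |α| = 1 := by
    have h1 : |α| ^ b.natDegree = 1 := by rw [← abs_pow, hpow, abs_one]
    by_contra hne
    rcases lt_or_gt_of_ne hne with hlt | hgt
    · have h2 := pow_lt_one₀ (abs_nonneg α) hlt hbdeg
      rw [h1] at h2; exact lt_irrefl 1 h2
    · have h2 := one_lt_pow₀ hgt hbdeg
      rw [h1] at h2; exact lt_irrefl 1 h2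
  rcases (abs_eq (by norm_num : (0:ℝ) ≤ 1)).mp habs with h1 | h1
  · left
    have hβ0 : β = 0 := by
      by_contra hβne
      have hshift : ∀ t : ℝ, b.eval (t + β) = b.eval t := by
        intro t
        have h := congrArg (Polynomial.eval t) hstep3b
        rw [eval_comp, hDeq] at h
        simp only [eval_add, eval_mul, eval_C, eval_X, h1, one_mul] at h
        exact h
      have hiter : ∀ k : ℕ, b.eval ((k:ℝ) * β) = b.eval 0 := by
        intro k; induction k with
        | zero => norm_num
        | succ n ih =>
          have harg : ((n+1 : ℕ):ℝ) * β = (n:ℝ) * β + β := by push_cast; ring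
          rw [harg, hshift, ih]
      have hconst : b = C (b.eval 0) := by
        apply Polynomial.eq_of_infinite_eval_eq
        apply Set.infinite_of_injective_forall_mem (f := fun k : ℕ => (k:ℝ) * β)
        · intro k1 k2 hk
          simp only at hk
          exact Nat.cast_injective (mul_right_cancel₀ hβne hk)
        · intro k
          simp only [Set.mem_setOf_eq, eval_C]
          exact hiter k
      rw [hconst] at hbdeg; simp at hbdeg
    rw [hDeq, h1, hβ0]; simp
  · right
    refine ⟨β, ?_⟩
    rw [hDeq, h1]
    simp only [map_neg, C_1]
    ring

end DTrick

section Star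

variable (F : Polynomial (Polynomial ℝ))

/-- constants embedding `ℝ → (ℝ[x])[y]`. -/
def CC2 : ℝ →+* Polynomial (Polynomial ℝ) :=
  (C : Polynomial ℝ →+* Polynomial (Polynomial ℝ)).comp (C : ℝ →+* Polynomial ℝ)

/-- `P(x,y)` as element of `B = (ℝ[x])[y]`. -/
def WW : Polynomial (Polynomial ℝ) :=
  eval₂ (C : Polynomial ℝ →+* Polynomial (Polynomial ℝ)) Polynomial.X F

/-- substitution `a(x) ↦ a(P(x,y))`. -/
def phiW : Polynomial ℝ →+* Polynomial (Polynomial ℝ) := eval₂RingHom (CC2) (WW F)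

/-- `P(x,z)` as element of `B[Z]`. -/
def AA : Polynomial (Polynomial (Polynomial ℝ)) :=
  F.map (C : Polynomial ℝ →+* Polynomial (Polynomial ℝ))

/-- `P(y,z)` as element of `B[Z]`. -/
def BB : Polynomial (Polynomial (Polynomial ℝ)) :=
  F.map (mapRingHom (C : ℝ →+* Polynomial ℝ))

def CC3 : ℝ →+* Polynomial (Polynomial (Polynomial ℝ)) :=
  (C : Polynomial (Polynomial ℝ) →+* Polynomial (Polynomial (Polynomial ℝ))).comp CC2

/-- substitution `a(x) ↦ a(P(x,z))`. -/
def phiA : Polynomial ℝ →+* Polynomial (Polynomial (Polynomial ℝ)) := eval₂RingHom CC3 (AA F)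

/-- `P(P(x,y),z)` as element of `B[Z]`. -/
def LHSp : Polynomial (Polynomial (Polynomial ℝ)) := F.map (phiW F)

/-- `P(u, u + w)` as polynomial in `w` with coefficients polynomial in `u`. -/
def Fe : Polynomial (Polynomial ℝ) := F.comp (Polynomial.X + Polynomial.C Polynomial.X)

def Dhat : Polynomial (Polynomial (Polynomial ℝ)) := BB F - AA F

def Tt (k : ℕ) : Polynomial (Polynomial (Polynomial ℝ)) :=
  phiA F ((Fe F).coeff k) * (Dhat F) ^ k

def Rstar : Polynomial (Polynomial (Polynomial ℝ)) := ∑ i ∈ Finset.range F.natDegree, Tt F (i + 1)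

lemma psi_comp_C (x y : ℝ) :
    (eval₂RingHom (evalRingHom x) y).comp (C : Polynomial ℝ →+* Polynomial (Polynomial ℝ)) =
      evalRingHom x :=
  RingHom.ext fun a => by simp [coe_eval₂RingHom]

lemma psi_comp_CC2 (x y : ℝ) :
    (eval₂RingHom (evalRingHom x) y).comp CC2 = RingHom.id ℝ :=
  RingHom.ext fun r => by simp [CC2, coe_eval₂RingHom]

lemma psi_comp_mapC (x y : ℝ) :
    (eval₂RingHom (evalRingHom x) y).comp (mapRingHom (C : ℝ →+* Polynomial ℝ)) =
      evalRingHom y := by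
  apply RingHom.ext; intro a
  simp only [RingHom.comp_apply, coe_mapRingHom, coe_eval₂RingHom, coe_evalRingHom]
  rw [eval₂_map]
  have h : (evalRingHom x).comp (C : ℝ →+* Polynomial ℝ) = RingHom.id ℝ :=
    RingHom.ext fun r => by simp
  rw [h]
  rfl

lemma psi_W (x y : ℝ) :
    (eval₂RingHom (evalRingHom x) y) (WW F) = E F x y := by
  unfold WW E
  have h := Polynomial.hom_eval₂ F (C : Polynomial ℝ →+* Polynomial (Polynomial ℝ))
      (eval₂RingHom (evalRingHom x) y) Polynomial.X
  rw [psi_comp_C] at h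
  have h2 : (eval₂RingHom (evalRingHom x) y) Polynomial.X = y := by
    simp [coe_eval₂RingHom]
  rw [h2] at h
  exact h

lemma psi_comp_phiW (x y : ℝ) :
    (eval₂RingHom (evalRingHom x) y).comp (phiW F) = evalRingHom (E F x y) := by
  apply RingHom.ext; intro a
  have h := Polynomial.hom_eval₂ a CC2 (eval₂RingHom (evalRingHom x) y) (WW F)
  rw [psi_comp_CC2, psi_W] at h
  simpa [phiW, coe_eval₂RingHom, coe_evalRingHom] using h

lemma ev3_LHS (x y z : ℝ) :
    eval₂ (eval₂RingHom (evalRingHom x) y) z (LHSp F) = E F (E F x y) z := by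
  unfold LHSp
  rw [eval₂_map, psi_comp_phiW]
  rfl

lemma Psi_comp_CC3 (x y z : ℝ) :
    (eval₂RingHom (eval₂RingHom (evalRingHom x) y) z).comp CC3 = RingHom.id ℝ := by
  apply RingHom.ext; intro r
  simp [CC3, CC2, coe_eval₂RingHom]

lemma Psi_AA (x y z : ℝ) :
    (eval₂RingHom (eval₂RingHom (evalRingHom x) y) z) (AA F) = E F x z := by
  unfold AA E
  simp only [coe_eval₂RingHom]
  rw [eval₂_map, psi_comp_C]

lemma Psi_BB (x y z : ℝ) :
    (eval₂RingHom (eval₂RingHom (evalRingHom x) y) z) (BB F) = E F y z := by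
  unfold BB E
  simp only [coe_eval₂RingHom]
  rw [eval₂_map, psi_comp_mapC]

lemma ev3_RHS (x y z : ℝ) :
    eval₂ (eval₂RingHom (evalRingHom x) y) z (eval₂ (phiA F) (BB F) F) =
      E F (E F x z) (E F y z) := by
  have h := Polynomial.hom_eval₂ F (phiA F)
      (eval₂RingHom (eval₂RingHom (evalRingHom x) y) z) (BB F)
  have h1 : (eval₂RingHom (eval₂RingHom (evalRingHom x) y) z).comp (phiA F) =
      evalRingHom (E F x z) := by
    apply RingHom.ext; intro a
    have h2 := Polynomial.hom_eval₂ a CC3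
        (eval₂RingHom (eval₂RingHom (evalRingHom x) y) z) (AA F)
    rw [Psi_comp_CC3, Psi_AA] at h2
    simpa [phiA, coe_eval₂RingHom, coe_evalRingHom] using h2
  rw [h1, Psi_BB] at h
  rw [show E F (E F x z) (E F y z) = eval₂ (evalRingHom (E F x z)) (E F y z) F from rfl]
  simpa [coe_eval₂RingHom] using h

lemma hcore (hP : ∀ x y z : ℝ, E F (E F x y) z = E F (E F x z) (E F y z)) :
    LHSp F = eval₂ (phiA F) (BB F) F := by
  apply funext3
  intro x y z
  rw [ev3_LHS, ev3_RHS]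
  exact hP x y z

lemma Fe_decomp : F = (Fe F).comp (Polynomial.X - Polynomial.C Polynomial.X) := by
  unfold Fe
  rw [comp_assoc]
  simp [add_comp, X_comp, C_comp, sub_add_cancel]

lemma Fe_natDegree : (Fe F).natDegree = F.natDegree := by
  unfold Fe
  rw [natDegree_comp, natDegree_X_add_C, mul_one]

lemma Fe_coeff_top : (Fe F).coeff F.natDegree = F.leadingCoeff := by
  have h1 : (Fe F).coeff F.natDegree = (Fe F).leadingCoeff := by
    rw [leadingCoeff, Fe_natDegree]
  rw [h1]
  unfold Fe
  rw [leadingCoeff_comp (by rw [natDegree_X_add_C]; exact one_ne_zero)]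
  rw [(monic_X_add_C Polynomial.X).leadingCoeff, one_pow, mul_one]

lemma Fe_coeff_zero : (Fe F).coeff 0 = Dg F := by
  rw [coeff_zero_eq_eval_zero]
  unfold Fe Dg
  rw [eval_comp]
  simp

lemma RHS_sum : eval₂ (phiA F) (BB F) F =
    ∑ k ∈ Finset.range (F.natDegree + 1), phiA F ((Fe F).coeff k) * (Dhat F) ^ k := by
  have h1 : eval₂ (phiA F) (BB F) (Polynomial.X - Polynomial.C Polynomial.X) = Dhat F := by
    rw [← coe_eval₂RingHom (phiA F) (BB F), map_sub]
    simp only [coe_eval₂RingHom, eval₂_X, eval₂_C]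
    unfold Dhat
    congr 1
    show eval₂ CC3 (AA F) Polynomial.X = AA F
    rw [eval₂_X]
  have hc := congrArg (eval₂ (phiA F) (BB F)) (Fe_decomp F)
  rw [hc, show eval₂ (phiA F) (BB F) ((Fe F).comp (Polynomial.X - Polynomial.C Polynomial.X)) =
      eval₂ (phiA F) (eval₂ (phiA F) (BB F) (Polynomial.X - Polynomial.C Polynomial.X)) (Fe F)
      from eval₂_comp _, h1, eval₂_eq_sum_range, Fe_natDegree]

lemma key_decomp (hP : ∀ x y z : ℝ, E F (E F x y) z = E F (E F x z) (E F y z)) :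
    LHSp F = phiA F (Dg F) + Rstar F := by
  rw [hcore F hP, RHS_sum, Finset.sum_range_succ']
  unfold Rstar Tt
  rw [pow_zero, mul_one, Fe_coeff_zero, add_comm]

lemma AA_natDegree : (AA F).natDegree = F.natDegree :=
  natDegree_map_eq_of_injective C_injective F

lemma BB_natDegree : (BB F).natDegree = F.natDegree :=
  natDegree_map_eq_of_injective
    (by rw [coe_mapRingHom]; exact Polynomial.map_injective _ C_injective) F

lemma AA_coeff (j : ℕ) : (AA F).coeff j = C (F.coeff j) := coeff_map _ _

lemma AA_leadingCoeff : (AA F).leadingCoeff = C F.leadingCoeff := by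
  rw [leadingCoeff, AA_natDegree, AA_coeff, leadingCoeff]

lemma BB_coeff (j : ℕ) :
    (BB F).coeff j = (F.coeff j).map (C : ℝ →+* Polynomial ℝ) := by
  unfold BB
  rw [coeff_map, coe_mapRingHom]

lemma Dhat_coeff (j : ℕ) :
    (Dhat F).coeff j = (F.coeff j).map (C : ℝ →+* Polynomial ℝ) - C (F.coeff j) := by
  unfold Dhat
  rw [coeff_sub, AA_coeff, BB_coeff]

lemma mapC_sub_C_eq_zero (a : Polynomial ℝ) (h : a.natDegree = 0) :
    a.map (C : ℝ →+* Polynomial ℝ) - C a = 0 := by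
  obtain ⟨c, rfl⟩ := natDegree_eq_zero.mp h
  simp

lemma mapC_sub_C_props (a : Polynomial ℝ) (h : a.natDegree ≠ 0) :
    (a.map (C : ℝ →+* Polynomial ℝ) - C a) ≠ 0 ∧
      (a.map (C : ℝ →+* Polynomial ℝ) - C a).natDegree = a.natDegree := by
  have hane : a ≠ 0 := fun h0 => h (by rw [h0]; simp)
  have hco : (a.map (C : ℝ →+* Polynomial ℝ) - C a).coeff a.natDegree = C a.leadingCoeff := by
    rw [coeff_sub, coeff_map, coeff_C, if_neg h, sub_zero, coeff_natDegree]
  have hconz : (a.map (C : ℝ →+* Polynomial ℝ) - C a).coeff a.natDegree ≠ 0 := by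
    rw [hco]
    simpa using leadingCoeff_ne_zero.mpr hane
  refine ⟨fun h0 => hconz (by rw [h0]; simp),
    le_antisymm ?_ (le_natDegree_of_ne_zero hconz)⟩
  rw [natDegree_le_iff_coeff_eq_zero]
  intro k hk
  rw [coeff_sub, coeff_map, coeff_eq_zero_of_natDegree_lt hk, map_zero, coeff_C,
    if_neg (show k ≠ 0 by omega), sub_zero]

lemma CC2_injective : Function.Injective ⇑CC2 := by
  intro a b h
  simp only [CC2, RingHom.comp_apply] at h
  exact C_injective (C_injective h)

lemma phiA_apply (a : Polynomial ℝ) : phiA F a = (a.map CC2).comp (AA F) := by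
  show eval₂ CC3 (AA F) a = _
  rw [Polynomial.comp, eval₂_map]
  rfl

lemma phiA_natDegree (a : Polynomial ℝ) :
    (phiA F a).natDegree = a.natDegree * F.natDegree := by
  rw [phiA_apply, natDegree_comp, AA_natDegree,
    natDegree_map_eq_of_injective CC2_injective]

lemma phiA_leadingCoeff (a : Polynomial ℝ) (hm : F.natDegree ≠ 0) :
    (phiA F a).leadingCoeff =
      CC2 a.leadingCoeff * (C F.leadingCoeff) ^ a.natDegree := by
  rw [phiA_apply, leadingCoeff_comp (by rw [AA_natDegree]; exact hm), AA_leadingCoeff,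
    natDegree_map_eq_of_injective CC2_injective]
  congr 1
  rw [leadingCoeff, natDegree_map_eq_of_injective CC2_injective, coeff_map, leadingCoeff]

lemma phiA_ne_zero (a : Polynomial ℝ) (ha : a ≠ 0) (hm : F.natDegree ≠ 0) :
    phiA F a ≠ 0 := by
  intro h0
  have hl := phiA_leadingCoeff F a hm
  rw [h0, leadingCoeff_zero] at hl
  have h1 : CC2 a.leadingCoeff ≠ 0 := fun h =>
    (leadingCoeff_ne_zero.mpr ha) (CC2_injective (by rw [h, map_zero]))
  have hF0 : F ≠ 0 := fun hF => hm (by rw [hF]; simp)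
  have h2 : (C F.leadingCoeff : Polynomial (Polynomial ℝ)) ^ a.natDegree ≠ 0 :=
    pow_ne_zero _ (by simpa using leadingCoeff_ne_zero.mpr hF0)
  exact (mul_ne_zero h1 h2) hl.symm

lemma Tt_zero (k : ℕ) (hk : (Fe F).coeff k = 0) : Tt F k = 0 := by
  unfold Tt
  rw [hk, map_zero, zero_mul]

lemma Tt_ne_zero (k : ℕ) (hk : (Fe F).coeff k ≠ 0) (hm : F.natDegree ≠ 0)
    (hD : Dhat F ≠ 0) : Tt F k ≠ 0 :=
  mul_ne_zero (phiA_ne_zero F _ hk hm) (pow_ne_zero _ hD)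

lemma Tt_natDegree (k : ℕ) (hk : (Fe F).coeff k ≠ 0) (hm : F.natDegree ≠ 0)
    (hD : Dhat F ≠ 0) :
    (Tt F k).natDegree =
      ((Fe F).coeff k).natDegree * F.natDegree + k * (Dhat F).natDegree := by
  unfold Tt
  rw [natDegree_mul (phiA_ne_zero F _ hk hm) (pow_ne_zero _ hD), phiA_natDegree,
    natDegree_pow]

lemma Tt_leadingCoeff (k : ℕ) (hm : F.natDegree ≠ 0) :
    (Tt F k).leadingCoeff =
      CC2 ((Fe F).coeff k).leadingCoeff * (C F.leadingCoeff) ^ ((Fe F).coeff k).natDegree *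
        (Dhat F).leadingCoeff ^ k := by
  unfold Tt
  rw [leadingCoeff_mul, leadingCoeff_pow, phiA_leadingCoeff F _ hm]

lemma natDegree_CC2 (rr : ℝ) : (CC2 rr).natDegree = 0 := by
  simp [CC2, RingHom.comp_apply]

lemma Tt_lead_props (k : ℕ) (hk : (Fe F).coeff k ≠ 0) (hm : F.natDegree ≠ 0)
    (hD : Dhat F ≠ 0) :
    (Tt F k).leadingCoeff ≠ 0 ∧
      (Tt F k).leadingCoeff.natDegree = k * (Dhat F).leadingCoeff.natDegree := by
  have hF0 : F ≠ 0 := fun hF => hm (by rw [hF]; simp)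
  have h1 : CC2 ((Fe F).coeff k).leadingCoeff ≠ 0 := fun h =>
    (leadingCoeff_ne_zero.mpr hk) (CC2_injective (by rw [h, map_zero]))
  have h2 : (C F.leadingCoeff : Polynomial (Polynomial ℝ)) ^ ((Fe F).coeff k).natDegree ≠ 0 :=
    pow_ne_zero _ (by simpa using leadingCoeff_ne_zero.mpr hF0)
  have h3 : (Dhat F).leadingCoeff ^ k ≠ 0 := pow_ne_zero _ (leadingCoeff_ne_zero.mpr hD)
  rw [Tt_leadingCoeff F k hm]
  refine ⟨mul_ne_zero (mul_ne_zero h1 h2) h3, ?_⟩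
  rw [natDegree_mul (mul_ne_zero h1 h2) h3, natDegree_mul h1 h2, natDegree_CC2,
    natDegree_pow, natDegree_C, mul_zero, natDegree_pow, zero_add, zero_add]

lemma coeff_sum_single {R : Type*} [Semiring R] (s : Finset ℕ) (f : ℕ → Polynomial R)
    (N : ℕ) (i0 : ℕ) (hi0 : i0 ∈ s) (hother : ∀ i ∈ s, i ≠ i0 → (f i).coeff N = 0) :
    (∑ i ∈ s, f i).coeff N = (f i0).coeff N := by
  rw [finset_sum_coeff]
  exact Finset.sum_eq_single_of_mem i0 hi0 hother

lemma natDegree_le_pred {R : Type*} [Semiring R] {p : Polynomial R} {n : ℕ}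
    (h : p.natDegree ≤ n) (h0 : p.coeff n = 0) (hn : n ≠ 0) : p.natDegree ≤ n - 1 := by
  rcases lt_or_eq_of_le h with h1 | h1
  · omega
  · have : p.leadingCoeff = 0 := by rw [leadingCoeff, h1]; exact h0
    rw [leadingCoeff_eq_zero] at this
    rw [this]
    simp

lemma Rstar_coeff_rep (hm : F.natDegree ≠ 0) (hD : Dhat F ≠ 0) (N : ℕ)
    (hN : ∀ i ∈ Finset.range F.natDegree, (Fe F).coeff (i+1) ≠ 0 →
      ((Fe F).coeff (i+1)).natDegree * F.natDegree + (i+1) * (Dhat F).natDegree ≤ N) :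
    (Rstar F).coeff N =
      ∑ i ∈ (Finset.range F.natDegree).filter
          (fun i => (Fe F).coeff (i+1) ≠ 0 ∧
            ((Fe F).coeff (i+1)).natDegree * F.natDegree + (i+1) * (Dhat F).natDegree = N),
        (Tt F (i+1)).leadingCoeff := by
  classical
  unfold Rstar
  rw [finset_sum_coeff]
  have hzero : ∀ i ∈ Finset.range F.natDegree,
      i ∉ (Finset.range F.natDegree).filter
          (fun i => (Fe F).coeff (i+1) ≠ 0 ∧
            ((Fe F).coeff (i+1)).natDegree * F.natDegree + (i+1) * (Dhat F).natDegree = N) →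
      (Tt F (i+1)).coeff N = 0 := by
    intro i hir hinot
    rw [Finset.mem_filter] at hinot
    by_cases hz : (Fe F).coeff (i+1) = 0
    · rw [Tt_zero F _ hz, coeff_zero]
    · have hne : ((Fe F).coeff (i+1)).natDegree * F.natDegree +
          (i+1) * (Dhat F).natDegree ≠ N := fun he => hinot ⟨hir, hz, he⟩
      apply coeff_eq_zero_of_natDegree_lt
      rw [Tt_natDegree F (i+1) hz hm hD]
      exact lt_of_le_of_ne (hN i hir hz) hne
  rw [← Finset.sum_subset (Finset.filter_subset _ _) hzero]
  apply Finset.sum_congr rfl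
  intro i hi
  rw [Finset.mem_filter] at hi
  rw [← hi.2.2, ← Tt_natDegree F (i+1) hi.2.1 hm hD, coeff_natDegree]

lemma lead_sum_ne_zero (hm : F.natDegree ≠ 0) (hD : Dhat F ≠ 0)
    (hdΔ : (Dhat F).leadingCoeff.natDegree ≠ 0)
    (s2 : Finset ℕ) (hs2 : s2.Nonempty)
    (hs2sub : ∀ i ∈ s2, (Fe F).coeff (i+1) ≠ 0) :
    ∃ idx : ℕ, idx ≠ 0 ∧ (∑ i ∈ s2, (Tt F (i+1)).leadingCoeff).coeff idx ≠ 0 := by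
  have hi0mem := s2.max'_mem hs2
  have hprops := Tt_lead_props F (s2.max' hs2 + 1) (hs2sub _ hi0mem) hm hD
  refine ⟨(s2.max' hs2 + 1) * (Dhat F).leadingCoeff.natDegree,
    Nat.mul_ne_zero (Nat.succ_ne_zero _) hdΔ, ?_⟩
  have hother : ∀ i ∈ s2, i ≠ s2.max' hs2 →
      ((Tt F (i+1)).leadingCoeff).coeff
        ((s2.max' hs2 + 1) * (Dhat F).leadingCoeff.natDegree) = 0 := by
    intro i hi hine
    have hlt : i < s2.max' hs2 := lt_of_le_of_ne (s2.le_max' i hi) hine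
    have hpi := Tt_lead_props F (i+1) (hs2sub i hi) hm hD
    apply coeff_eq_zero_of_natDegree_lt
    rw [hpi.2]
    exact mul_lt_mul_of_pos_right (by omega) (Nat.pos_of_ne_zero hdΔ)
  rw [coeff_sum_single s2 _ _ (s2.max' hs2) hi0mem hother]
  rw [← hprops.2, coeff_natDegree]
  exact leadingCoeff_ne_zero.mpr hprops.1

lemma LHSp_coeff (j : ℕ) : (LHSp F).coeff j = phiW F (F.coeff j) := coeff_map _ _

lemma phiW_C (c : ℝ) : phiW F (C c) = CC2 c := by
  show eval₂ CC2 (WW F) (C c) = CC2 c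
  rw [eval₂_C]

theorem star_main (hm : F.natDegree ≠ 0) (hA : ∃ j, (F.coeff j).natDegree ≠ 0)
    (hP : ∀ x y z : ℝ, E F (E F x y) z = E F (E F x z) (E F y z)) :
    Dg F = Polynomial.X ∧ F.leadingCoeff.natDegree = 0 ∧
      ∀ k, 1 ≤ k → ((Fe F).coeff k).natDegree = 0 := by
  have hF0 : F ≠ 0 := fun hF => hm (by rw [hF]; simp)
  have hDaff := D_affine F hm hA hP
  have hdecomp := key_decomp F hP
  have hRstar_eq : Rstar F = LHSp F - phiA F (Dg F) := by rw [hdecomp]; ring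
  obtain ⟨j0, hj0⟩ := hA
  have hDhat_ne : Dhat F ≠ 0 := by
    intro h0
    have h1 := Dhat_coeff F j0
    rw [h0, coeff_zero] at h1
    exact (mapC_sub_C_props _ hj0).1 h1.symm
  have hΔr_ne : (Dhat F).coeff (Dhat F).natDegree ≠ 0 := by
    rw [coeff_natDegree]; exact leadingCoeff_ne_zero.mpr hDhat_ne
  have hr_nonconst : (F.coeff (Dhat F).natDegree).natDegree ≠ 0 := by
    intro h
    exact hΔr_ne (by rw [Dhat_coeff, mapC_sub_C_eq_zero _ h])
  have hdΔ : (Dhat F).leadingCoeff.natDegree ≠ 0 := by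
    rw [leadingCoeff, Dhat_coeff, (mapC_sub_C_props _ hr_nonconst).2]
    exact hr_nonconst
  have hr_le : (Dhat F).natDegree ≤ F.natDegree := by
    have h := natDegree_sub_le (BB F) (AA F)
    rw [BB_natDegree, AA_natDegree, max_self] at h
    exact h
  have hFetop : (Fe F).coeff F.natDegree ≠ 0 := by
    rw [Fe_coeff_top]; exact leadingCoeff_ne_zero.mpr hF0
  have hmem : F.natDegree - 1 ∈ (Finset.range F.natDegree).filter
      (fun i => (Fe F).coeff (i+1) ≠ 0) := by
    rw [Finset.mem_filter, Finset.mem_range]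
    have hm1 : F.natDegree - 1 + 1 = F.natDegree := by omega
    rw [hm1]
    exact ⟨by omega, hFetop⟩
  -- notation
  have hsupnn : ((Finset.range F.natDegree).filter
      (fun i => (Fe F).coeff (i+1) ≠ 0)).Nonempty := ⟨_, hmem⟩
  obtain ⟨istar, histar_mem, histar_eq⟩ := Finset.exists_mem_eq_sup _ hsupnn
    (fun i => ((Fe F).coeff (i+1)).natDegree * F.natDegree + (i+1) * (Dhat F).natDegree)
  -- M := the sup
  set M := ((Finset.range F.natDegree).filter (fun i => (Fe F).coeff (i+1) ≠ 0)).sup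
      (fun i => ((Fe F).coeff (i+1)).natDegree * F.natDegree + (i+1) * (Dhat F).natDegree)
    with hMdef
  have hNM : ∀ i ∈ Finset.range F.natDegree, (Fe F).coeff (i+1) ≠ 0 →
      ((Fe F).coeff (i+1)).natDegree * F.natDegree + (i+1) * (Dhat F).natDegree ≤ M := by
    intro i hir hine
    exact Finset.le_sup
      (f := fun i => ((Fe F).coeff (i+1)).natDegree * F.natDegree +
        (i+1) * (Dhat F).natDegree)
      (Finset.mem_filter.mpr ⟨hir, hine⟩)
  have hrepM := Rstar_coeff_rep F hm hDhat_ne M hNM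
  have hs2M : ((Finset.range F.natDegree).filter
      (fun i => (Fe F).coeff (i+1) ≠ 0 ∧
        ((Fe F).coeff (i+1)).natDegree * F.natDegree + (i+1) * (Dhat F).natDegree = M)).Nonempty := by
    refine ⟨istar, Finset.mem_filter.mpr ⟨Finset.mem_of_mem_filter _ histar_mem, ?_, histar_eq.symm⟩⟩
    exact (Finset.mem_filter.mp histar_mem).2
  obtain ⟨idxM, hidxM_ne, hidxM⟩ := lead_sum_ne_zero F hm hDhat_ne hdΔ _ hs2M
    (fun i hi => (Finset.mem_filter.mp hi).2.1)
  have hRM_ne : (Rstar F).coeff M ≠ 0 := by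
    rw [hrepM]
    intro h0
    rw [h0, coeff_zero] at hidxM
    exact hidxM rfl
  have hMle : M ≤ (Rstar F).natDegree := le_natDegree_of_ne_zero hRM_ne
  have hDg_le1 : (Dg F).natDegree ≤ 1 := by
    rcases hDaff with h | ⟨β, h⟩
    · rw [h, natDegree_X]
    · rw [h]
      refine le_trans (natDegree_sub_le _ _) ?_
      simp [natDegree_C, natDegree_X]
  have hRd_le : (Rstar F).natDegree ≤ F.natDegree := by
    rw [hRstar_eq]
    refine le_trans (natDegree_sub_le _ _) ?_
    have h1 : (LHSp F).natDegree ≤ F.natDegree := natDegree_map_le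
    have h2 : (phiA F (Dg F)).natDegree ≤ F.natDegree := by
      rw [phiA_natDegree]
      calc (Dg F).natDegree * F.natDegree ≤ 1 * F.natDegree :=
            Nat.mul_le_mul_right _ hDg_le1
        _ = F.natDegree := one_mul _
    simp [h1, h2]
  have hMm : M ≤ F.natDegree := le_trans hMle hRd_le
  -- (a) leading coefficient of F is constant
  have ham_const : F.leadingCoeff.natDegree = 0 := by
    by_contra hamnc
    have hcm : (Dhat F).coeff F.natDegree ≠ 0 := by
      rw [Dhat_coeff, show F.coeff F.natDegree = F.leadingCoeff from coeff_natDegree]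
      exact (mapC_sub_C_props _ hamnc).1
    have hrm : (Dhat F).natDegree = F.natDegree :=
      le_antisymm hr_le (le_natDegree_of_ne_zero hcm)
    have hδbig := hNM (F.natDegree - 1) (Finset.mem_of_mem_filter _ hmem)
      (Finset.mem_filter.mp hmem).2
    rw [show F.natDegree - 1 + 1 = F.natDegree from by omega, hrm, Fe_coeff_top] at hδbig
    have h3 : F.natDegree ≤ F.leadingCoeff.natDegree * F.natDegree :=
      Nat.le_mul_of_pos_left _ (Nat.pos_of_ne_zero hamnc)
    have h4 : 1 ≤ F.natDegree * F.natDegree :=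
      Nat.one_le_iff_ne_zero.mpr (Nat.mul_ne_zero hm hm)
    linarith [hδbig, hMm, h3, h4]
  obtain ⟨c, hc⟩ := natDegree_eq_zero.mp ham_const
  have hcne : c ≠ 0 := by
    intro h0
    rw [h0, map_zero] at hc
    exact (leadingCoeff_ne_zero.mpr hF0) hc.symm
  have hDgX : Dg F = Polynomial.X := by
    rcases hDaff with h | ⟨β, h⟩
    · exact h
    exfalso
    have hphiDg : phiA F (Dg F) = C (CC2 β) - AA F := by
      rw [h, map_sub]
      congr 1
      · show eval₂ CC3 (AA F) (C β) = C (CC2 β)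
        rw [eval₂_C]; rfl
      · show eval₂ CC3 (AA F) Polynomial.X = AA F
        rw [eval₂_X]
    have hRm : (Rstar F).coeff F.natDegree = CC2 (2*c) := by
      rw [hRstar_eq, hphiDg, coeff_sub, coeff_sub, LHSp_coeff, AA_coeff, coeff_C,
        if_neg hm, show F.coeff F.natDegree = F.leadingCoeff from coeff_natDegree, ← hc,
        phiW_C, show (C (C c) : Polynomial (Polynomial ℝ)) = CC2 c from rfl,
        zero_sub, sub_neg_eq_add, ← map_add]
      congr 1; ring
    have hRm_ne : (Rstar F).coeff F.natDegree ≠ 0 := by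
      rw [hRm]
      intro h0
      exact (mul_ne_zero (two_ne_zero) hcne) (CC2_injective (by rw [h0, map_zero]))
    have hNm : ∀ i ∈ Finset.range F.natDegree, (Fe F).coeff (i+1) ≠ 0 →
        ((Fe F).coeff (i+1)).natDegree * F.natDegree + (i+1) * (Dhat F).natDegree ≤
          F.natDegree :=
      fun i hir hine => le_trans (hNM i hir hine) hMm
    have hrepm := Rstar_coeff_rep F hm hDhat_ne F.natDegree hNm
    rcases Finset.eq_empty_or_nonempty ((Finset.range F.natDegree).filter
        (fun i => (Fe F).coeff (i+1) ≠ 0 ∧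
          ((Fe F).coeff (i+1)).natDegree * F.natDegree + (i+1) * (Dhat F).natDegree =
            F.natDegree)) with he | hne
    · rw [he, Finset.sum_empty] at hrepm
      exact hRm_ne hrepm
    · obtain ⟨idx, hidx_ne, hidx⟩ := lead_sum_ne_zero F hm hDhat_ne hdΔ _ hne
        (fun i hi => (Finset.mem_filter.mp hi).2.1)
      rw [← hrepm, hRm] at hidx
      apply hidx
      show (C (C (2*c)) : Polynomial (Polynomial ℝ)).coeff idx = 0
      rw [coeff_C, if_neg hidx_ne]
  refine ⟨hDgX, ham_const, ?_⟩
  have hphiDg : phiA F (Dg F) = AA F := by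
    rw [hDgX]
    show eval₂ CC3 (AA F) Polynomial.X = AA F
    rw [eval₂_X]
  have hRm0 : (Rstar F).coeff F.natDegree = 0 := by
    rw [hRstar_eq, coeff_sub, hphiDg, LHSp_coeff, AA_coeff,
      show F.coeff F.natDegree = F.leadingCoeff from coeff_natDegree, ← hc, phiW_C,
      show (C (C c) : Polynomial (Polynomial ℝ)) = CC2 c from rfl, sub_self]
  have hRle : (Rstar F).natDegree ≤ F.natDegree - 1 :=
    natDegree_le_pred hRd_le hRm0 hm
  intro k hk
  by_cases hz : (Fe F).coeff k = 0
  · rw [hz]; simp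
  by_cases hkm : F.natDegree < k
  · exact absurd (coeff_eq_zero_of_natDegree_lt (by rw [Fe_natDegree]; exact hkm)) hz
  push_neg at hkm
  have hkmem : k - 1 ∈ Finset.range F.natDegree := Finset.mem_range.mpr (by omega)
  have hδk := hNM (k-1) hkmem (by rw [show k - 1 + 1 = k from by omega]; exact hz)
  rw [show k - 1 + 1 = k from by omega] at hδk
  have hMle2 : M ≤ F.natDegree - 1 := le_trans hMle hRle
  by_contra hne0
  have h3 : F.natDegree ≤ ((Fe F).coeff k).natDegree * F.natDegree :=
    Nat.le_mul_of_pos_left _ (Nat.pos_of_ne_zero hne0)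
  have h4 := le_trans h3 (le_trans (Nat.le_add_right _ _) hδk)
  have h2 : 1 ≤ F.natDegree := Nat.pos_of_ne_zero hm
  omega

end Star

section Endgame

lemma ev2_mapC (g : Polynomial ℝ) (w t : ℝ) :
    eval₂ (evalRingHom w) t (g.map (C : ℝ →+* Polynomial ℝ)) = g.eval t := by
  rw [eval₂_map]
  have h : (evalRingHom w).comp (C : ℝ →+* Polynomial ℝ) = RingHom.id ℝ :=
    RingHom.ext fun r => by simp
  rw [h]
  rfl

lemma ev2_gcomp (g : Polynomial ℝ) (q : Polynomial (Polynomial ℝ)) (w t : ℝ) :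
    eval₂ (evalRingHom w) t ((g.map (C : ℝ →+* Polynomial ℝ)).comp q) =
      g.eval (eval₂ (evalRingHom w) t q) := by
  rw [show eval₂ (evalRingHom w) t ((g.map (C : ℝ →+* Polynomial ℝ)).comp q) =
      eval₂ (evalRingHom w) (eval₂ (evalRingHom w) t q) (g.map (C : ℝ →+* Polynomial ℝ))
    from eval₂_comp _]
  exact ev2_mapC g w _

lemma coeff_comp_X_add_C {R : Type*} [CommSemiring R] (p : Polynomial R) (a : R) (k : ℕ) :
    (p.comp (Polynomial.X + Polynomial.C a)).coeff k =
      ∑ e ∈ Finset.range (p.natDegree + 1),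
        p.coeff e * (a ^ (e - k) * (e.choose k : R)) := by
  show (eval₂ C (Polynomial.X + Polynomial.C a) p).coeff k = _
  rw [eval₂_eq_sum_range, finset_sum_coeff]
  apply Finset.sum_congr rfl
  intro e _
  rw [coeff_C_mul, coeff_X_add_C_pow]

theorem g_linear (g : Polynomial ℝ) (hg : g.natDegree ≠ 0)
    (heq : ∀ w t : ℝ, g.eval w + g.eval (t - g.eval w) =
      g.eval t + g.eval (w + g.eval (t - w) - g.eval t)) :
    g.natDegree = 1 := by
  by_contra h1
  have hm2 : 2 ≤ g.natDegree := by omega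
  set m := g.natDegree with hmdef
  have hgne : g ≠ 0 := fun h0 => hg (by rw [hmdef, h0]; simp)
  have hc' : g.leadingCoeff ≠ 0 := leadingCoeff_ne_zero.mpr hgne
  set gT : Polynomial (Polynomial ℝ) := g.map (C : ℝ →+* Polynomial ℝ) with hgT
  have hgT_coeff : ∀ j, gT.coeff j = C (g.coeff j) := fun j => coeff_map _ _
  have hgT_deg : gT.natDegree = m := natDegree_map_eq_of_injective C_injective g
  set Xw : Polynomial ℝ := Polynomial.X with hXw
  set L : Polynomial (Polynomial ℝ) :=
    Polynomial.C Xw + gT.comp (Polynomial.X - Polynomial.C Xw) - gT with hL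
  have hid : Polynomial.C g + gT.comp (Polynomial.X - Polynomial.C g) = gT + gT.comp L := by
    apply funext2
    intro w t
    have hXsub : ∀ b : Polynomial ℝ,
        eval₂ (evalRingHom w) t (Polynomial.X - Polynomial.C b) = t - b.eval w := by
      intro b
      rw [← coe_eval₂RingHom, map_sub]
      simp [coe_eval₂RingHom]
    have hCb : ∀ b : Polynomial ℝ,
        eval₂ (evalRingHom w) t (Polynomial.C b) = b.eval w := by
      intro b; rw [eval₂_C]; rfl
    rw [← coe_eval₂RingHom (evalRingHom w) t, map_add, map_add]
    simp only [coe_eval₂RingHom]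
    rw [hCb, ev2_gcomp, hXsub]
    rw [show eval₂ (evalRingHom w) t gT = g.eval t from ev2_mapC g w t]
    have hLval : eval₂ (evalRingHom w) t L = w + g.eval (t - w) - g.eval t := by
      rw [hL, ← coe_eval₂RingHom (evalRingHom w) t, map_sub, map_add]
      simp only [coe_eval₂RingHom]
      rw [hCb, ev2_gcomp, hXsub,
        show eval₂ (evalRingHom w) t gT = g.eval t from ev2_mapC g w t]
      simp [hXw]
    rw [ev2_gcomp, hLval]
    exact heq w t
  -- coefficient computations
  set K := m * (m - 1) with hK
  have hmK : m ≤ K := Nat.le_mul_of_pos_right m (by omega)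
  have hK0 : K ≠ 0 := Nat.mul_ne_zero hg (by omega)
  -- LHS coefficient at (K, m) is zero
  have hLHS : ((Polynomial.C g + gT.comp (Polynomial.X - Polynomial.C g)).coeff K).coeff m
      = 0 := by
    rw [coeff_add, coeff_C, if_neg hK0, zero_add]
    rw [show Polynomial.X - Polynomial.C g = Polynomial.X + Polynomial.C (-g) from by
      rw [map_neg]; ring]
    rw [coeff_comp_X_add_C, hgT_deg, finset_sum_coeff]
    apply Finset.sum_eq_zero
    intro e he
    rw [Finset.mem_range] at he
    rcases lt_or_ge e K with hlt | hge
    · rw [Nat.choose_eq_zero_of_lt hlt]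
      simp
    · have heK : e = K := by omega
      have hem : e = m := by omega
      rw [heK, Nat.sub_self, pow_zero, Nat.choose_self, Nat.cast_one, mul_one, mul_one,
        hgT_coeff]
      rw [coeff_C, if_neg (by omega : m ≠ 0)]
  -- L facts
  have hLcoeff : ∀ j, L.coeff j = (Polynomial.C Xw).coeff j +
      (∑ e ∈ Finset.range (m + 1),
        C (g.coeff e) * ((-Xw) ^ (e - j) * (e.choose j : Polynomial ℝ))) - C (g.coeff j) := by
    intro j
    rw [hL, coeff_sub, coeff_add, hgT_coeff]
    rw [show Polynomial.X - Polynomial.C Xw = Polynomial.X + Polynomial.C (-Xw) from by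
      rw [map_neg]; ring]
    rw [coeff_comp_X_add_C, hgT_deg]
    congr 2
    apply Finset.sum_congr rfl
    intro e _
    rw [hgT_coeff]
  have hL_high : ∀ j, m - 1 < j → L.coeff j = 0 := by
    intro j hj
    rw [hLcoeff, coeff_C, if_neg (by omega : j ≠ 0), zero_add]
    rcases lt_or_ge j (m+1) with hjm | hjm
    · have hjm' : j = m := by omega
      rw [hjm', Finset.sum_eq_single m]
      · rw [Nat.sub_self, pow_zero, Nat.choose_self, Nat.cast_one, mul_one, mul_one,
          sub_self]
      · intro e he hne
        rw [Finset.mem_range] at he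
        rw [Nat.choose_eq_zero_of_lt (by omega), Nat.cast_zero, mul_zero, mul_zero]
      · intro hnot
        exact absurd (Finset.mem_range.mpr (by omega)) hnot
    · rw [Finset.sum_eq_zero, coeff_eq_zero_of_natDegree_lt (by omega : g.natDegree < j),
        map_zero, sub_zero]
      intro e he
      rw [Finset.mem_range] at he
      rw [Nat.choose_eq_zero_of_lt (by omega), Nat.cast_zero, mul_zero, mul_zero]
  have hL_degle : L.natDegree ≤ m - 1 := by
    rw [natDegree_le_iff_coeff_eq_zero]
    intro j hj
    exact hL_high j hj
  have hgm : g.coeff m = g.leadingCoeff := coeff_natDegree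
  have hmne : (m : ℝ) ≠ 0 := Nat.cast_ne_zero.mpr hg
  have hch : (m.choose (m-1)) = m := by
    have h := Nat.choose_succ_self_right (m-1)
    rwa [show m - 1 + 1 = m from by omega] at h
  have hL_top : L.coeff (m-1) = C (-(m : ℝ) * g.leadingCoeff) * Polynomial.X := by
    rw [hLcoeff, coeff_C, if_neg (by omega : m - 1 ≠ 0), zero_add]
    rw [Finset.sum_eq_sum_sdiff_singleton_add
      (Finset.mem_range.mpr (by omega : m < m + 1))]
    have hmem : m - 1 ∈ (Finset.range (m+1)) \ {m} := by
      rw [Finset.mem_sdiff, Finset.mem_range, Finset.mem_singleton]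
      omega
    have hother : ∀ e ∈ (Finset.range (m+1)) \ {m}, e ≠ m - 1 →
        C (g.coeff e) * ((-Xw) ^ (e - (m-1)) * (e.choose (m-1) : Polynomial ℝ)) = 0 := by
      intro e he hne
      rw [Finset.mem_sdiff, Finset.mem_range, Finset.mem_singleton] at he
      rw [Nat.choose_eq_zero_of_lt (by omega), Nat.cast_zero, mul_zero, mul_zero]
    rw [Finset.sum_eq_single_of_mem (m-1) hmem hother]
    rw [Nat.sub_self, pow_zero, Nat.choose_self, Nat.cast_one, mul_one, mul_one]
    rw [show m - (m-1) = 1 from by omega, hch, hgm, pow_one, ← C_eq_natCast]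
    simp only [hXw, C_mul, C_neg]
    ring
  have hL_topne : L.coeff (m-1) ≠ 0 := by
    rw [hL_top]
    intro h0
    have h2 : (-(m:ℝ) * g.leadingCoeff) = 0 := by
      have h3 := congrArg (fun p => Polynomial.coeff p 1) h0
      simpa [coeff_C_mul] using h3
    rcases mul_eq_zero.mp h2 with h | h
    · exact hmne (neg_eq_zero.mp h)
    · exact hc' h
  have hL_deg : L.natDegree = m - 1 :=
    le_antisymm hL_degle (le_natDegree_of_ne_zero hL_topne)
  have hL_lead : L.leadingCoeff = C (-(m : ℝ) * g.leadingCoeff) * Polynomial.X := by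
    rw [leadingCoeff, hL_deg, hL_top]
  have hcompdeg : (gT.comp L).natDegree = K := by
    rw [natDegree_comp, hgT_deg, hL_deg]
  have hcomplead : (gT.comp L).leadingCoeff =
      C g.leadingCoeff * (C (-(m : ℝ) * g.leadingCoeff) * Polynomial.X) ^ m := by
    rw [leadingCoeff_comp (by rw [hL_deg]; omega), hL_lead, hgT_deg]
    congr 1
    rw [leadingCoeff, hgT_deg, hgT_coeff, hgm]
  have hRHS : ((gT + gT.comp L).coeff K).coeff m =
      g.leadingCoeff * (-(m : ℝ) * g.leadingCoeff) ^ m := by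
    rw [coeff_add, coeff_add]
    have h1 : (gT.coeff K).coeff m = 0 := by
      rw [hgT_coeff, coeff_C, if_neg (by omega : m ≠ 0)]
    have h2 : (gT.comp L).coeff K =
        C g.leadingCoeff * (C (-(m:ℝ) * g.leadingCoeff) * Polynomial.X) ^ m := by
      rw [← hcomplead, ← hcompdeg, coeff_natDegree]
    rw [h1, h2, zero_add, mul_pow, ← C_pow, ← mul_assoc, ← C_mul, coeff_C_mul,
      coeff_X_pow, if_pos rfl, mul_one]
  have hfin := congrArg (fun p => (Polynomial.coeff p K).coeff m) hid
  have hz : (0:ℝ) = g.leadingCoeff * (-(m:ℝ) * g.leadingCoeff) ^ m := by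
    rw [← hLHS, hfin, hRHS]
  exact (mul_ne_zero hc'
    (pow_ne_zero _ (mul_ne_zero (neg_ne_zero.mpr hmne) hc'))) hz.symm

end Endgame

section GForm

variable (F : Polynomial (Polynomial ℝ))

def gpol : Polynomial ℝ :=
  ∑ k ∈ Finset.Icc 1 F.natDegree, C (((Fe F).coeff k).coeff 0) * X ^ k

lemma gpol_coeff (l : ℕ) (hl : 1 ≤ l) (hl2 : l ≤ F.natDegree) :
    (gpol F).coeff l = ((Fe F).coeff l).coeff 0 := by
  unfold gpol
  rw [finset_sum_coeff, Finset.sum_eq_single_of_mem l (Finset.mem_Icc.mpr ⟨hl, hl2⟩)]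
  · rw [coeff_C_mul, coeff_X_pow, if_pos rfl, mul_one]
  · intro b _ hb
    rw [coeff_C_mul, coeff_X_pow, if_neg (Ne.symm hb), mul_zero]

lemma gpol_coeff_zero : (gpol F).coeff 0 = 0 := by
  unfold gpol
  rw [finset_sum_coeff]
  apply Finset.sum_eq_zero
  intro k hk
  rw [Finset.mem_Icc] at hk
  rw [coeff_C_mul, coeff_X_pow, if_neg (by omega), mul_zero]

lemma gpol_coeff_high (l : ℕ) (hl : F.natDegree < l) : (gpol F).coeff l = 0 := by
  unfold gpol
  rw [finset_sum_coeff]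
  apply Finset.sum_eq_zero
  intro k hk
  rw [Finset.mem_Icc] at hk
  rw [coeff_C_mul, coeff_X_pow, if_neg (by omega), mul_zero]

lemma Fe_eq_gform (hDgX : Dg F = Polynomial.X)
    (hek : ∀ k, 1 ≤ k → ((Fe F).coeff k).natDegree = 0) :
    Fe F = Polynomial.C Polynomial.X + (gpol F).map (C : ℝ →+* Polynomial ℝ) := by
  apply Polynomial.ext
  intro k
  rw [coeff_add, coeff_map]
  rcases Nat.eq_zero_or_pos k with hk0 | hkpos
  · subst hk0
    rw [Fe_coeff_zero, hDgX, gpol_coeff_zero, map_zero, add_zero, coeff_C, if_pos rfl]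
  rcases le_or_gt k F.natDegree with hkm | hkm
  · rw [gpol_coeff F k hkpos hkm, coeff_C, if_neg (by omega), zero_add]
    obtain ⟨c, hc⟩ := natDegree_eq_zero.mp (hek k hkpos)
    rw [← hc]
    simp
  · rw [gpol_coeff_high F k hkm, map_zero, add_zero, coeff_C, if_neg (by omega)]
    exact coeff_eq_zero_of_natDegree_lt (by rw [Fe_natDegree]; exact hkm)

lemma E_gform (hDgX : Dg F = Polynomial.X)
    (hek : ∀ k, 1 ≤ k → ((Fe F).coeff k).natDegree = 0) :
    ∀ x y : ℝ, E F x y = x + (gpol F).eval (y - x) := by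
  intro x y
  unfold E
  rw [show eval₂ (evalRingHom x) y F =
      eval₂ (evalRingHom x) y ((Fe F).comp (Polynomial.X - Polynomial.C Polynomial.X)) from by
    rw [← Fe_decomp]]
  rw [show eval₂ (evalRingHom x) y ((Fe F).comp (Polynomial.X - Polynomial.C Polynomial.X)) =
      eval₂ (evalRingHom x)
        (eval₂ (evalRingHom x) y (Polynomial.X - Polynomial.C Polynomial.X)) (Fe F)
    from eval₂_comp _]
  have h1 : eval₂ (evalRingHom x) y (Polynomial.X - Polynomial.C Polynomial.X) = y - x := by
    rw [← coe_eval₂RingHom, map_sub]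
    simp [coe_eval₂RingHom]
  rw [h1, Fe_eq_gform F hDgX hek, ← coe_eval₂RingHom, map_add]
  simp only [coe_eval₂RingHom]
  rw [eval₂_C, ev2_mapC]
  simp

end GForm

theorem main_F (F : Polynomial (Polynomial ℝ))
    (hP : ∀ x y z : ℝ, E F (E F x y) z = E F (E F x z) (E F y z)) :
    (∃ a : ℝ, ∀ x y : ℝ, E F x y = a * x + (1 - a) * y) ∨
      (∃ q : Polynomial ℝ, ∀ x y : ℝ, E F x y = q.eval x) := by
  by_cases hm : F.natDegree = 0
  · right
    obtain ⟨p, hp⟩ := natDegree_eq_zero.mp hm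
    refine ⟨p, fun x y => ?_⟩
    unfold E
    rw [← hp, eval₂_C]
    rfl
  by_cases hA : ∃ j, (F.coeff j).natDegree ≠ 0
  · obtain ⟨hDgX, ham, hek⟩ := star_main F hm hA hP
    have hF0 : F ≠ 0 := fun hF => hm (by rw [hF]; simp)
    have hEg := E_gform F hDgX hek
    have hgtop : (gpol F).coeff F.natDegree ≠ 0 := by
      rw [gpol_coeff F _ (Nat.pos_of_ne_zero hm) le_rfl, Fe_coeff_top]
      obtain ⟨c, hc⟩ := natDegree_eq_zero.mp ham
      rw [← hc, coeff_C, if_pos rfl]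
      intro h0
      rw [h0, map_zero] at hc
      exact (leadingCoeff_ne_zero.mpr hF0) hc.symm
    have hgdeg_ne : (gpol F).natDegree ≠ 0 := by
      have := le_natDegree_of_ne_zero hgtop
      omega
    have heqg : ∀ w t : ℝ, (gpol F).eval w + (gpol F).eval (t - (gpol F).eval w) =
        (gpol F).eval t +
          (gpol F).eval (w + (gpol F).eval (t - w) - (gpol F).eval t) := by
      intro w t
      have h := hP 0 w t
      simp only [hEg, zero_add, sub_zero] at h
      exact h
    have hdeg1 := g_linear (gpol F) hgdeg_ne heqg
    have hgeq : gpol F = C ((gpol F).coeff 1) * X + C ((gpol F).coeff 0) :=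
      eq_X_add_C_of_natDegree_le_one (le_of_eq hdeg1)
    left
    refine ⟨1 - (gpol F).coeff 1, fun x y => ?_⟩
    have heval : ∀ t : ℝ, (gpol F).eval t = (gpol F).coeff 1 * t := by
      intro t
      conv_lhs => rw [hgeq]
      simp [gpol_coeff_zero]
    rw [hEg x y, heval]
    ring
  · push_neg at hA
    have hco : ∀ (x : ℝ) (j : ℕ), evalRingHom x (F.coeff j) = evalRingHom 0 (F.coeff j) := by
      intro x j
      obtain ⟨c, hc⟩ := natDegree_eq_zero.mp (hA j)
      rw [← hc]
      simp
    have hEp : ∀ x y : ℝ, E F x y = (F.map (evalRingHom 0)).eval y := by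
      intro x y
      unfold E
      rw [eval_map, eval₂_eq_sum_range, eval₂_eq_sum_range]
      apply Finset.sum_congr rfl
      intro i _
      rw [hco]
    set p := F.map (evalRingHom 0) with hpdef
    have hpp : ∀ z : ℝ, p.eval (p.eval z) = p.eval z := by
      intro z
      have h := hP 0 0 z
      simp only [hEp] at h
      exact h.symm
    by_cases hpd : p.natDegree = 0
    · right
      obtain ⟨cp, hcp⟩ := natDegree_eq_zero.mp hpd
      refine ⟨C cp, fun x y => ?_⟩
      rw [hEp, ← hcp]
      simp
    · left
      refine ⟨0, fun x y => ?_⟩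
      have hcomp : p.comp p = p := Polynomial.funext fun z => by
        rw [eval_comp]; exact hpp z
      have hpd1 : p.natDegree = 1 := by
        have h := congrArg Polynomial.natDegree hcomp
        rw [natDegree_comp] at h
        exact Nat.eq_of_mul_eq_mul_left (Nat.pos_of_ne_zero hpd) (by rw [mul_one]; exact h)
      have hpform : p = C (p.coeff 1) * X + C (p.coeff 0) :=
        eq_X_add_C_of_natDegree_le_one (le_of_eq hpd1)
      have hlead : p.coeff 1 ≠ 0 := by
        intro h0
        have h2 : p.leadingCoeff = 0 := by rw [leadingCoeff, hpd1]; exact h0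
        rw [leadingCoeff_eq_zero] at h2
        rw [h2] at hpd1
        simp at hpd1
      have hkey : C (p.coeff 1) * p + C (p.coeff 0) = p := by
        have h2 : (C (p.coeff 1) * X + C (p.coeff 0)).comp p = p := by
          rw [← hpform]; exact hcomp
        rw [add_comp, mul_comp, C_comp, C_comp, X_comp] at h2
        exact h2
      have hc1 : p.coeff 1 = 1 := by
        have h := congrArg (fun q => Polynomial.coeff q 1) hkey
        simp only [coeff_add, coeff_C_mul, coeff_C, if_neg one_ne_zero, add_zero] at h
        exact mul_left_cancel₀ hlead (by rw [mul_one]; exact h)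
      have hc0 : p.coeff 0 = 0 := by
        have h := congrArg (fun q => Polynomial.coeff q 0) hkey
        simp only [coeff_add, coeff_C_mul, coeff_C, if_pos rfl] at h
        rw [hc1, one_mul] at h
        simp at h
        linarith [h]
      have hpX : p = Polynomial.X := by
        rw [hpform, hc1, hc0]
        simp
      rw [hEp, hpX]
      simp

lemma E_aeval (P : MvPolynomial (Fin 2) ℝ) (x y : ℝ) :
    E (MvPolynomial.aeval ![Polynomial.C Polynomial.X, Polynomial.X] P) x y =
      MvPolynomial.eval ![x, y] P := by
  unfold E
  induction P using MvPolynomial.induction_on with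
  | C a => simp
  | add p q hp hq => simp only [map_add, eval₂_add, hp, hq]
  | mul_X p i hp =>
    simp only [map_mul, MvPolynomial.aeval_X, MvPolynomial.eval_X, eval₂_mul, hp]
    congr 1
    fin_cases i <;> simp

end SelfDistrib

end

/-- Lemma 5.3: any real polynomial `P(x,y)` in two variables satisfying the right
self-distributivity equation `P(P(x,y),z) = P(P(x,z),P(y,z))` is either of the form
`P(x,y) = a·x + (1−a)·y` or a polynomial in the variable `x` only. -/
theorem polynomial_self_distributive_classification (P : MvPolynomial (Fin 2) ℝ)
    (hP : ∀ x y z : ℝ,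
      MvPolynomial.eval ![MvPolynomial.eval ![x, y] P, z] P =
        MvPolynomial.eval ![MvPolynomial.eval ![x, z] P, MvPolynomial.eval ![y, z] P] P) :
    (∃ a : ℝ, ∀ x y : ℝ, MvPolynomial.eval ![x, y] P = a * x + (1 - a) * y) ∨
    (∃ q : Polynomial ℝ, ∀ x y : ℝ, MvPolynomial.eval ![x, y] P = q.eval x) := by
  have hE : ∀ x y : ℝ,
      SelfDistrib.E (MvPolynomial.aeval ![Polynomial.C Polynomial.X, Polynomial.X] P) x y =
        MvPolynomial.eval ![x, y] P := SelfDistrib.E_aeval P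
  have hP' : ∀ x y z : ℝ,
      SelfDistrib.E (MvPolynomial.aeval ![Polynomial.C Polynomial.X, Polynomial.X] P)
          (SelfDistrib.E (MvPolynomial.aeval ![Polynomial.C Polynomial.X, Polynomial.X] P) x y)
          z =
        SelfDistrib.E (MvPolynomial.aeval ![Polynomial.C Polynomial.X, Polynomial.X] P)
          (SelfDistrib.E (MvPolynomial.aeval ![Polynomial.C Polynomial.X, Polynomial.X] P) x z)
          (SelfDistrib.E (MvPolynomial.aeval ![Polynomial.C Polynomial.X, Polynomial.X] P) y
            z) := by
    intro x y z
    simp only [hE]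
    exact hP x y z
  rcases SelfDistrib.main_F _ hP' with ⟨a, ha⟩ | ⟨q, hq⟩
  · left
    exact ⟨a, fun x y => by rw [← hE, ha]⟩
  · right
    exact ⟨q, fun x y => by rw [← hE, hq]⟩
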